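/- Let R be a real m×k matrix. The subgroup R(Z^k) of R^m is dense in R^m if and only if for every a ∈ R^m, R^t a ∈ Z^k implies a = 0. -/

import Mathlib

open Submodule Filter

section Key

variable {E : Type*} [NormedAddCommGroup E] [InnerProductSpace ℝ E] [FiniteDimensional ℝ E]

/-- If a subgroup of a finite dimensional real inner product space is not dense, there is a
nonzero linear functional taking integer values on it. -/
theorem key_functional (G : AddSubgroup E) (hG : ¬ Dense (G : Set E)) :
    ∃ f : E →ₗ[ℝ] ℝ, f ≠ 0 ∧ ∀ g ∈ G, ∃ z : ℤ, f g = (z : ℝ) := by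
  classical
  set H : AddSubgroup E := G.topologicalClosure with hHdef
  have hHclosed : IsClosed (H : Set E) := G.isClosed_topologicalClosure
  have hHne : (H : Set E) ≠ Set.univ := by
    intro h
    exact hG (by rw [dense_iff_closure_eq]; exact h)
  -- the maximal linear subspace contained in H
  set V : Submodule ℝ E :=
    { carrier := {x | ∀ t : ℝ, t • x ∈ H}
      add_mem' := fun hx hy t => by
        rw [smul_add]; exact H.add_mem (hx t) (hy t)
      zero_mem' := fun t => by rw [smul_zero]; exact H.zero_mem
      smul_mem' := fun c x hx t => by rw [smul_smul]; exact hx (t * c) } with hVdef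
  have hVH : ∀ x ∈ V, x ∈ H := fun x hx => by simpa using hx 1
  set W : Submodule ℝ E := Vᗮ with hWdef
  haveI : CompleteSpace V := FiniteDimensional.complete ℝ V
  haveI : CompleteSpace W := FiniteDimensional.complete ℝ W
  set L : Submodule ℤ E :=
    (AddSubgroup.toIntSubmodule H) ⊓ (W.restrictScalars ℤ) with hLdef
  have hLW : ∀ x ∈ L, x ∈ W := fun x hx => hx.2
  have hLH : ∀ x ∈ L, x ∈ H := fun x hx => hx.1
  -- L is discrete
  have hdisc : ∃ ε > 0, ∀ x ∈ L, ‖x‖ < ε → x = 0 := by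
    by_contra hcon
    push_neg at hcon
    have hcon' : ∀ n : ℕ, ∃ x, x ∈ L ∧ ‖x‖ < ((n : ℝ) + 1)⁻¹ ∧ x ≠ 0 := by
      intro n
      obtain ⟨x, hx1, hx2, hx3⟩ := hcon (((n : ℝ) + 1)⁻¹)
        (by positivity)
      exact ⟨x, hx1, hx2, hx3⟩
    choose x hx1 hx2 hx3 using hcon'
    have hxn : ∀ n, (0 : ℝ) < ‖x n‖ := fun n => norm_pos_iff.2 (hx3 n)
    set u : ℕ → E := fun n => ‖x n‖⁻¹ • x n with hudef
    have hu : ∀ n, u n ∈ Metric.sphere (0 : E) 1 := by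
      intro n
      simp only [mem_sphere_iff_norm, sub_zero, hudef, norm_smul, norm_inv, norm_norm]
      rw [inv_mul_cancel₀ (hxn n).ne']
    obtain ⟨a, ha, φ, hφ, hlim⟩ := (isCompact_sphere (0 : E) 1).tendsto_subseq hu
    have ha1 : ‖a‖ = 1 := by simpa using ha
    have hrlim : Tendsto (fun n => ‖x (φ n)‖) atTop (nhds 0) := by
      have h1 : Tendsto (fun n : ℕ => ((n : ℝ) + 1)⁻¹) atTop (nhds 0) :=
        tendsto_one_div_add_atTop_nhds_zero_nat.congr (by intro n; rw [one_div])
      refine squeeze_zero (fun n => (hxn (φ n)).le) (fun n => ?_) h1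
      refine le_trans (hx2 (φ n)).le ?_
      have : (n : ℝ) + 1 ≤ (φ n : ℝ) + 1 := by
        have := hφ.le_apply (x := n); exact_mod_cast by linarith [this]
      exact inv_anti₀ (by positivity) this
    have haW : a ∈ W := by
      have hWc : IsClosed (W : Set E) := W.closed_of_finiteDimensional
      refine hWc.mem_of_tendsto hlim (Eventually.of_forall fun n => ?_)
      exact W.smul_mem _ (hLW _ (hx1 (φ n)))
    have haV : a ∈ V := by
      intro t
      have hmem : ∀ n, (⌊t / ‖x (φ n)‖⌋ : ℤ) • x (φ n) ∈ H :=
        fun n => AddSubgroup.zsmul_mem H (hLH _ (hx1 (φ n))) _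
      have hclim : Tendsto (fun n => (⌊t / ‖x (φ n)‖⌋ : ℝ) * ‖x (φ n)‖) atTop (nhds t) := by
        rw [← tendsto_sub_nhds_zero_iff]
        refine squeeze_zero_norm (fun n => ?_) hrlim
        set r := ‖x (φ n)‖
        have hr : (0 : ℝ) < r := hxn (φ n)
        have h1 : (⌊t / r⌋ : ℝ) * r ≤ t := by
          have := Int.floor_le (t / r)
          calc (⌊t / r⌋ : ℝ) * r ≤ (t / r) * r := by nlinarith
            _ = t := div_mul_cancel₀ t hr.ne'
        have h2 : t - r ≤ (⌊t / r⌋ : ℝ) * r := by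
          have := Int.lt_floor_add_one (t / r)
          have h3 : t / r * r < ((⌊t / r⌋ : ℝ) + 1) * r := by nlinarith
          rw [div_mul_cancel₀ t hr.ne'] at h3
          nlinarith
        rw [Real.norm_eq_abs, abs_le]
        constructor <;> nlinarith
      have hten : Tendsto (fun n => (⌊t / ‖x (φ n)‖⌋ : ℤ) • x (φ n)) atTop (nhds (t • a)) := by
        refine (hclim.smul hlim).congr fun n => ?_
        show ((⌊t / ‖x (φ n)‖⌋ : ℝ) * ‖x (φ n)‖) • (u (φ n)) = _
        rw [show u (φ n) = ‖x (φ n)‖⁻¹ • x (φ n) from rfl, smul_smul, mul_assoc,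
          mul_inv_cancel₀ (hxn (φ n)).ne', mul_one, Int.cast_smul_eq_zsmul]
      have : t • a ∈ (H : Set E) :=
        hHclosed.mem_of_tendsto hten (Eventually.of_forall fun n => hmem n)
      exact this
    have : a = 0 := by
      have h := (V.orthogonal_disjoint).le_bot (Submodule.mem_inf.2 ⟨haV, haW⟩)
      exact Submodule.mem_bot ℝ |>.1 h
    rw [this, norm_zero] at ha1
    exact one_ne_zero ha1.symm
  obtain ⟨ε, hε, hsep⟩ := hdisc
  haveI hLdisc : DiscreteTopology L := by
    rw [discreteTopology_iff_isOpen_singleton_zero]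
    rw [Metric.isOpen_iff]
    intro y hy
    refine ⟨ε, hε, fun z hz => ?_⟩
    simp only [Set.mem_singleton_iff] at hy ⊢
    subst hy
    have hz' : ‖(z : E)‖ < ε := by
      simpa [Metric.mem_ball, Subtype.dist_eq, dist_eq_norm] using hz
    exact Subtype.ext (hsep _ z.2 hz')
  -- projection of H to W lands in L
  have hproj : ∀ g ∈ H, g - (orthogonalProjection V g : E) ∈ L := by
    intro g hg
    refine Submodule.mem_inf.mpr ⟨?_, ?_⟩
    · exact H.sub_mem hg (hVH _ (orthogonalProjection V g).2)
    · exact Submodule.sub_starProjection_mem_orthogonal (K := V) g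
  by_cases hsup : V ⊔ span ℝ (L : Set E) = ⊤
  · -- full lattice case
    have hWne : W ≠ ⊥ := by
      intro hWbot
      have hVtop : V = ⊤ := by rwa [hWdef, Submodule.orthogonal_eq_bot_iff] at hWbot
      apply hHne
      rw [Set.eq_univ_iff_forall]
      intro x
      exact hVH x (hVtop ▸ Submodule.mem_top)
    have hspanL : span ℝ (L : Set E) = W := by
      refine le_antisymm (span_le.2 fun x hx => hLW x hx) fun w hw => ?_
      have hw' : w ∈ V ⊔ span ℝ (L : Set E) := hsup ▸ Submodule.mem_top
      obtain ⟨v, hv, s, hs, rfl⟩ := Submodule.mem_sup.1 hw'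
      have hsW : s ∈ W := (span_le.2 fun x hx => hLW x hx : span ℝ (L : Set E) ≤ W) hs
      have hvW : v ∈ W := by
        have hveq : v = (v + s) - s := by abel
        rw [hveq]; exact W.sub_mem hw hsW
      have hv0 : v = 0 := by
        have h := (V.orthogonal_disjoint).le_bot (Submodule.mem_inf.2 ⟨hv, hvW⟩)
        exact Submodule.mem_bot ℝ |>.1 h
      rw [hv0, zero_add]; exact hs
    set L₀ : Submodule ℤ W := L.comap ((W.subtype).restrictScalars ℤ) with hL₀def
    haveI hL₀disc : DiscreteTopology L₀ := by
      refine DiscreteTopology.preimage_of_continuous_injective (L : Set E) ?_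
        (Submodule.injective_subtype W)
      exact (LinearMap.continuous_of_finiteDimensional (W.subtype))
    have himg : W.subtype '' (L₀ : Set W) = (L : Set E) := by
      ext x
      constructor
      · rintro ⟨y, hy, rfl⟩; exact hy
      · intro hx; exact ⟨⟨x, hLW x hx⟩, hx, rfl⟩
    haveI hL₀Z : IsZLattice ℝ L₀ := ⟨by
      apply Submodule.map_injective_of_injective (Submodule.injective_subtype W)
      rw [Submodule.map_span, Submodule.map_top, Submodule.range_subtype, himg, hspanL]⟩
    set ι := Module.Free.ChooseBasisIndex ℤ L₀ with hιdef
    set b : Module.Basis ι ℤ L₀ := Module.Free.chooseBasis ℤ L₀ with hbdef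
    set c : Module.Basis ι ℝ W := b.ofZLatticeBasis ℝ L₀ with hcdef
    haveI : Nontrivial W := Submodule.nontrivial_iff_ne_bot.2 hWne
    obtain ⟨i0⟩ := c.index_nonempty
    refine ⟨(c.coord i0).comp ((orthogonalProjection W).toLinearMap), ?_, ?_⟩
    · intro h0
      have h1 : ((c.coord i0).comp ((orthogonalProjection W).toLinearMap)) ((c i0 : E)) = 1 := by
        rw [LinearMap.comp_apply]
        have : (orthogonalProjection W).toLinearMap ((c i0 : E)) = c i0 :=
          orthogonalProjection_mem_subspace_eq_self (c i0)
        rw [this, Module.Basis.coord_apply, Module.Basis.repr_self, Finsupp.single_eq_same]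
      rw [h0] at h1
      simp at h1
    · intro g hg
      have hgH : g ∈ H := G.le_topologicalClosure hg
      have hpw : g - (orthogonalProjection V g : E) ∈ L := hproj g hgH
      set w : W := ⟨g - (orthogonalProjection V g : E), hLW _ hpw⟩ with hwdef
      have hw0 : w ∈ L₀ := by
        rw [hL₀def, Submodule.mem_comap]
        exact hpw
      have hVWo : (orthogonalProjection V g : E) ∈ Wᗮ := by
        rw [hWdef]
        exact Submodule.le_orthogonal_orthogonal V (orthogonalProjection V g).2
      have hproj_eq : orthogonalProjection W g = w := by
        have hgdec : g = (w : E) + (orthogonalProjection V g : E) := by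
          rw [hwdef]; simp
        calc orthogonalProjection W g
            = orthogonalProjection W ((w : E) + (orthogonalProjection V g : E)) := by
              rw [← hgdec]
          _ = orthogonalProjection W (w : E)
              + orthogonalProjection W ((orthogonalProjection V g : E)) := by
              rw [map_add]
          _ = w + 0 := by
              rw [orthogonalProjection_mem_subspace_eq_self,
                Submodule.orthogonalProjectionOnto_apply_of_mem_orthogonal hVWo]
          _ = w := add_zero w
      refine ⟨b.repr ⟨w, hw0⟩ i0, ?_⟩
      rw [LinearMap.comp_apply]
      have : (orthogonalProjection W).toLinearMap g = w := hproj_eq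
      rw [this, Module.Basis.coord_apply]
      exact_mod_cast Module.Basis.ofZLatticeBasis_repr_apply ℝ L₀ b ⟨w, hw0⟩ i0
  · -- non-spanning case: take a vector orthogonal to everything
    haveI : CompleteSpace (V ⊔ span ℝ (L : Set E) : Submodule ℝ E) :=
      FiniteDimensional.complete ℝ _
    have hbot : (V ⊔ span ℝ (L : Set E))ᗮ ≠ ⊥ := by
      intro hb
      exact hsup (Submodule.orthogonal_eq_bot_iff.1 hb)
    obtain ⟨a, haS, ha0⟩ := Submodule.exists_mem_ne_zero_of_ne_bot hbot
    refine ⟨(innerSL ℝ a).toLinearMap, ?_, ?_⟩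
    · intro h0
      have h1 : ((innerSL ℝ a).toLinearMap) a = (0 : ℝ) := by rw [h0]; simp
      simp only [ContinuousLinearMap.coe_coe, innerSL_apply_apply] at h1
      rw [real_inner_self_eq_norm_sq] at h1
      exact ha0 (norm_eq_zero.1 ((pow_eq_zero_iff two_ne_zero).1 h1))
    · intro g hg
      have hgH : g ∈ H := G.le_topologicalClosure hg
      have hgS : g ∈ V ⊔ span ℝ (L : Set E) := by
        have h1 : (orthogonalProjection V g : E) ∈ V ⊔ span ℝ (L : Set E) :=
          Submodule.mem_sup_left (orthogonalProjection V g).2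
        have h2 : g - (orthogonalProjection V g : E) ∈ V ⊔ span ℝ (L : Set E) :=
          Submodule.mem_sup_right (subset_span (hproj g hgH))
        have hgeq : g = (g - (orthogonalProjection V g : E)) + (orthogonalProjection V g : E) := by
          abel
        rw [hgeq]
        exact Submodule.add_mem _ h2 h1
      refine ⟨0, ?_⟩
      simp only [ContinuousLinearMap.coe_coe, innerSL_apply_apply, Int.cast_zero]
      exact Submodule.inner_left_of_mem_orthogonal hgS haS

end Key

theorem stmt2 (m k : ℕ) (R : Matrix (Fin m) (Fin k) ℝ) :
    Dense (Set.range fun v : Fin k → ℤ => R.mulVec fun j => (v j : ℝ)) ↔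
      ∀ a : Fin m → ℝ, (∀ j, ∃ z : ℤ, R.transpose.mulVec a j = (z : ℝ)) → a = 0 := by
  constructor
  · -- dense → duality condition
    intro hd a ha
    choose zz hzz using ha
    by_contra ha0
    set C : Set (Fin m → ℝ) := {x | ∃ z : ℤ, dotProduct a x = (z : ℝ)} with hCdef
    have hCclosed : IsClosed C := by
      have : C = (fun x => dotProduct a x) ⁻¹' (Set.range (Int.cast : ℤ → ℝ)) := by
        ext x; simp [hCdef, eq_comm]
      rw [this]
      refine IsClosed.preimage ?_ Int.isClosedEmbedding_coe_real.isClosed_range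
      unfold dotProduct
      exact continuous_finset_sum _ fun i _ => continuous_const.mul (continuous_apply i)
    have hsub : (Set.range fun v : Fin k → ℤ => R.mulVec fun j => (v j : ℝ)) ⊆ C := by
      rintro _ ⟨v, rfl⟩
      refine ⟨∑ j, zz j * v j, ?_⟩
      rw [Matrix.dotProduct_mulVec, ← Matrix.mulVec_transpose]
      have : ∀ j, R.transpose.mulVec a j = ((zz j : ℝ)) := hzz
      unfold dotProduct
      push_cast
      exact Finset.sum_congr rfl fun j _ => by rw [this j]
    have hall : ∀ x : Fin m → ℝ, x ∈ C := by
      intro x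
      have : x ∈ closure (Set.range fun v : Fin k → ℤ => R.mulVec fun j => (v j : ℝ)) := hd x
      exact hCclosed.closure_subset_iff.2 hsub this
    have haa : dotProduct a a ≠ 0 := fun h => ha0 (dotProduct_self_eq_zero.1 h)
    obtain ⟨z, hz⟩ := hall ((2 * dotProduct a a)⁻¹ • a)
    rw [dotProduct_smul, smul_eq_mul, inv_mul_eq_div,
      div_eq_iff (by positivity : (2 : ℝ) * dotProduct a a ≠ 0)] at hz
    · have hfac : (2 * (z : ℝ) - 1) * dotProduct a a = 0 := by
        linear_combination -hz
      rcases mul_eq_zero.1 hfac with h | h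
      · have h2z : ((2 * z : ℤ) : ℝ) = 1 := by push_cast; linarith
        have : (2 * z : ℤ) = 1 := by exact_mod_cast h2z
        omega
      · exact haa h
  · -- duality condition → dense
    intro hcond
    by_contra hnd
    set G : AddSubgroup (EuclideanSpace ℝ (Fin m)) :=
      { carrier := Set.range fun v : Fin k → ℤ => WithLp.toLp 2 (R.mulVec fun j => (v j : ℝ))
        add_mem' := by
          rintro _ _ ⟨v, rfl⟩ ⟨w, rfl⟩
          refine ⟨v + w, ?_⟩
          show WithLp.toLp 2 (R.mulVec (fun j => (((v + w) j : ℤ) : ℝ)))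
            = WithLp.toLp 2 (R.mulVec (fun j => ((v j : ℤ) : ℝ))) + WithLp.toLp 2 (R.mulVec (fun j => ((w j : ℤ) : ℝ)))
          have h : (fun j => (((v + w) j : ℤ) : ℝ))
              = (fun j => ((v j : ℤ) : ℝ)) + fun j => ((w j : ℤ) : ℝ) := by
            funext j; simp
          rw [h, Matrix.mulVec_add, WithLp.toLp_add]
        zero_mem' := ⟨0, by
          show WithLp.toLp 2 (R.mulVec (fun j => (((0 : Fin k → ℤ) j : ℤ) : ℝ))) = 0
          have h : (fun j => (((0 : Fin k → ℤ) j : ℤ) : ℝ)) = (0 : Fin k → ℝ) := by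
            funext j; simp
          rw [h, Matrix.mulVec_zero, WithLp.toLp_zero]⟩
        neg_mem' := by
          rintro _ ⟨v, rfl⟩
          refine ⟨-v, ?_⟩
          show WithLp.toLp 2 (R.mulVec (fun j => (((-v) j : ℤ) : ℝ))) = -WithLp.toLp 2 (R.mulVec (fun j => ((v j : ℤ) : ℝ)))
          have h : (fun j => (((-v) j : ℤ) : ℝ)) = -fun j => ((v j : ℤ) : ℝ) := by
            funext j; simp
          rw [h, Matrix.mulVec_neg, WithLp.toLp_neg] } with hGdef
    have hG : ¬ Dense (G : Set (EuclideanSpace ℝ (Fin m))) := by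
      intro h
      apply hnd
      have h2 := (PiLp.homeomorph 2 (fun _ : Fin m => ℝ)).surjective.denseRange.dense_image
        (PiLp.homeomorph 2 (fun _ : Fin m => ℝ)).continuous h
      convert h2 using 1
      ext y
      constructor
      · rintro ⟨v, rfl⟩
        exact ⟨_, ⟨v, rfl⟩, rfl⟩
      · rintro ⟨_, ⟨v, rfl⟩, rfl⟩
        exact ⟨v, rfl⟩
    obtain ⟨f, hf0, hfz⟩ := key_functional G hG
    set a : Fin m → ℝ := fun i => f (WithLp.toLp 2 (Pi.single i 1)) with hadef
    have hfx : ∀ x : EuclideanSpace ℝ (Fin m), f x = ∑ i, x i * a i := by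
      intro x
      have hx2 : x = ∑ i, x i • WithLp.toLp 2 (Pi.single i 1 : Fin m → ℝ) := by
        ext j
        simp [Pi.single_apply]
      calc f x = f (∑ i, x i • WithLp.toLp 2 (Pi.single i 1 : Fin m → ℝ)) := by rw [← hx2]
        _ = ∑ i, x i * a i := by
            rw [map_sum]
            exact Finset.sum_congr rfl fun i _ => by rw [map_smul]; rfl
    have haz : ∀ j, ∃ z : ℤ, R.transpose.mulVec a j = (z : ℝ) := by
      intro j
      obtain ⟨z, hz⟩ := hfz (WithLp.toLp 2 (R.mulVec fun i => ((Pi.single j 1 : Fin k → ℤ) i : ℝ)))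
        ⟨Pi.single j 1, rfl⟩
      refine ⟨z, ?_⟩
      rw [← hz, hfx]
      have hcol : (fun i => ((Pi.single j 1 : Fin k → ℤ) i : ℝ)) = Pi.single j (1 : ℝ) := by
        funext i
        by_cases h : i = j
        · subst h; simp
        · simp [Pi.single_eq_of_ne h]
      rw [hcol, Matrix.mulVec_single]
      simp only [Matrix.mulVec, dotProduct, Matrix.transpose_apply, PiLp.toLp_apply,
        Pi.smul_apply, Matrix.col_apply, op_smul_eq_mul, mul_one]
    have ha : a = 0 := hcond a haz
    apply hf0
    ext x
    rw [hfx]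
    simp [ha]
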